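/- Let γ < 0 be real, let k ≥ 2 be a natural number, and let 0 < q < 1. Define the failure rate of the NGNB(γ,k,q) distribution by r(y) = w_{γ,k,q}(y) / Σ_{j=y}^∞ w_{γ,k,q}(j). Then r is strictly decreasing: r(y) > r(y+1) for every natural number y (the NGNB has decreasing failure rate, DFR). -/

import Mathlib

/-- NGNB unnormalized weight: `w γ k q y = (C(y+k-1, y))^γ * q^y`,
where the binomial coefficient is raised to the real power `γ`. -/
noncomputable def ngnbWeight (γ : ℝ) (k : ℕ) (q : ℝ) (y : ℕ) : ℝ :=
  ((y + k - 1).choose y : ℝ) ^ γ * q ^ y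

/-- Failure rate of the NGNB distribution: `r(y) = w(y) / Σ_{j ≥ y} w(j)`. -/
noncomputable def ngnbFailureRate (γ : ℝ) (k : ℕ) (q : ℝ) (y : ℕ) : ℝ :=
  ngnbWeight γ k q y / ∑' j : ℕ, ngnbWeight γ k q (y + j)

lemma ngnb_wpos (γ : ℝ) (k : ℕ) (hk : 1 ≤ k) (q : ℝ) (hq0 : 0 < q) (y : ℕ) :
    0 < ngnbWeight γ k q y := by
  unfold ngnbWeight
  have h1 : 0 < ((y + k - 1).choose y : ℝ) := by
    exact_mod_cast Nat.choose_pos (by omega)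
  exact mul_pos (Real.rpow_pos_of_pos h1 γ) (pow_pos hq0 y)

lemma ngnb_step (γ : ℝ) (k : ℕ) (hk : 1 ≤ k) (q : ℝ) (m : ℕ) :
    ngnbWeight γ k q (m + 1)
      = ((m + k : ℝ) / (m + 1)) ^ γ * q * ngnbWeight γ k q m := by
  unfold ngnbWeight
  have h1 : (m + k) * (m + k - 1).choose m = (m + 1) * (m + k).choose (m + 1) := by
    have h := Nat.add_one_mul_choose_eq (m + k - 1) m
    rw [show m + k - 1 + 1 = m + k from by omega] at h
    rw [h]; ring
  have h3 : m + 1 + k - 1 = m + k := by omega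
  have h1' : ((m : ℝ) + k) * ((m + k - 1).choose m : ℝ)
      = ((m : ℝ) + 1) * ((m + k).choose (m + 1) : ℝ) := by exact_mod_cast h1
  have hm1 : (0 : ℝ) < (m : ℝ) + 1 := by positivity
  have hc : ((m + 1 + k - 1).choose (m + 1) : ℝ)
      = ((m + k : ℝ) / (m + 1)) * ((m + k - 1).choose m : ℝ) := by
    rw [h3]
    field_simp
    linarith
  rw [hc, Real.mul_rpow (by positivity)
    (by exact_mod_cast Nat.cast_nonneg ((m + k - 1).choose m))]
  ring

theorem ngnb_DFR (γ : ℝ) (hγ : γ < 0) (k : ℕ) (hk : 2 ≤ k)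
    (q : ℝ) (hq0 : 0 < q) (hq1 : q < 1) (y : ℕ) :
    ngnbFailureRate γ k q y > ngnbFailureRate γ k q (y + 1) := by
  have hk1 : 1 ≤ k := by omega
  set w := ngnbWeight γ k q with hw
  have wpos : ∀ n, 0 < w n := ngnb_wpos γ k hk1 q hq0
  set ρ : ℕ → ℝ := fun m => ((m + k : ℝ) / (m + 1)) ^ γ * q with hρ
  have hstep : ∀ m, w (m + 1) = ρ m * w m := fun m => ngnb_step γ k hk1 q m
  have hρpos : ∀ m, 0 < ρ m := by
    intro m
    have hb : (0 : ℝ) < ((m : ℝ) + k) / (m + 1) := by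
      have : (0 : ℝ) < (m : ℝ) + k := by
        have : (1 : ℝ) ≤ (k : ℝ) := by exact_mod_cast hk1
        positivity
      positivity
    exact mul_pos (Real.rpow_pos_of_pos hb γ) hq0
  have hkR : (2 : ℝ) ≤ (k : ℝ) := by exact_mod_cast hk
  have hbase1 : ∀ m : ℕ, (1 : ℝ) < ((m : ℝ) + k) / (m + 1) := by
    intro m
    rw [lt_div_iff₀ (by positivity)]
    linarith
  have hρltq : ∀ m, ρ m < q := by
    intro m
    have h := Real.rpow_lt_one_of_one_lt_of_neg (hbase1 m) hγ
    calc ρ m < 1 * q := mul_lt_mul_of_pos_right h hq0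
    _ = q := one_mul q
  have hρmono : StrictMono ρ := by
    apply strictMono_nat_of_lt_succ
    intro m
    have hb : (((m : ℕ) + 1 : ℕ) + k : ℝ) / (((m : ℕ) + 1 : ℕ) + 1)
        < ((m : ℝ) + k) / (m + 1) := by
      push_cast
      rw [div_lt_div_iff₀ (by positivity) (by positivity)]
      nlinarith
    have h := Real.rpow_lt_rpow_of_neg (by positivity) hb hγ
    have hρm : ρ (m + 1) = ((((m : ℕ) + 1 : ℕ) + k : ℝ) / (((m : ℕ) + 1 : ℕ) + 1)) ^ γ * q := by
      simp [hρ]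
    rw [hρm]
    exact mul_lt_mul_of_pos_right h hq0
  have hle : ∀ a j, w (a + j) ≤ w a * q ^ j := by
    intro a j
    induction j with
    | zero => simp
    | succ n ih =>
      have he : w (a + (n + 1)) = ρ (a + n) * w (a + n) := hstep (a + n)
      rw [he]
      calc ρ (a + n) * w (a + n) ≤ q * (w a * q ^ n) :=
            mul_le_mul (hρltq _).le ih (wpos _).le hq0.le
      _ = w a * q ^ (n + 1) := by ring
  have hsum : ∀ a, Summable (fun j => w (a + j)) := by
    intro a
    exact Summable.of_nonneg_of_le (fun j => (wpos _).le) (hle a)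
      ((summable_geometric_of_lt_one hq0.le hq1).mul_left (w a))
  have hSpos : ∀ a, 0 < ∑' j, w (a + j) := by
    intro a
    exact Summable.tsum_pos (hsum a) (fun j => (wpos _).le) 0 (wpos _)
  have key : w (y + 1) * ∑' j, w (y + j) < w y * ∑' j, w (y + 1 + j) := by
    rw [← tsum_mul_left, ← tsum_mul_left]
    apply Summable.tsum_lt_tsum_of_nonneg (i := 1)
    · intro b
      exact mul_nonneg (wpos _).le (wpos _).le
    · intro j
      have he1 : y + 1 + j = (y + j) + 1 := by omega
      rw [he1, hstep (y + j), hstep y]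
      have hρle : ρ y ≤ ρ (y + j) := hρmono.monotone (Nat.le_add_right y j)
      have := mul_le_mul_of_nonneg_right hρle
        (mul_nonneg (wpos y).le (wpos (y + j)).le)
      nlinarith [wpos y, wpos (y + j)]
    · have he1 : y + 1 + 1 = (y + 1) + 1 := rfl
      rw [he1, hstep (y + 1), hstep y]
      have hρlt : ρ y < ρ (y + 1) := hρmono (Nat.lt_succ_self y)
      have hpos : 0 < ρ y * w y * w y :=
        mul_pos (mul_pos (hρpos y) (wpos y)) (wpos y)
      calc ρ y * w y * (ρ y * w y) = ρ y * (ρ y * w y * w y) := by ring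
      _ < ρ (y + 1) * (ρ y * w y * w y) := mul_lt_mul_of_pos_right hρlt hpos
      _ = w y * (ρ (y + 1) * (ρ y * w y)) := by ring
    · exact (hsum (y + 1)).mul_left (w y)
  show ngnbFailureRate γ k q (y + 1) < ngnbFailureRate γ k q y
  unfold ngnbFailureRate
  rw [div_lt_div_iff₀ (hSpos (y + 1)) (hSpos y)]
  exact key
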